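/- Let R be a commutative ring such that for every maximal ideal m of R, the canonical localization map π : R → R_m is injective and makes R_m an R-algebra of finite type. Then R has only finitely many maximal ideals. -/

import Mathlib

/-- Key lemma: if the localization at a prime `m` is injective and of finite type
over `R`, then there is `s ∉ m` such that every `t ∉ m` divides a power of `s`. -/
lemma exists_good_elt {R : Type*} [CommRing R] (m : Ideal R) [m.IsPrime]
    (hinj : Function.Injective (algebraMap R (Localization.AtPrime m)))
    (hft : Algebra.FiniteType R (Localization.AtPrime m)) :
    ∃ s ∈ m.primeCompl, ∀ t ∈ m.primeCompl, ∃ (b : R) (n : ℕ), b * t = s ^ n := by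
  classical
  set S := Localization.AtPrime m with hS
  obtain ⟨T, hT⟩ := hft.out
  choose num den hden using fun x : S => IsLocalization.exists_mk'_eq m.primeCompl x
  set s0 : m.primeCompl := ∏ x ∈ T, den x with hs0
  -- the subalgebra of elements `z` with `z * s0 ^ n ∈ R` for some `n`
  let A : Subalgebra R S :=
  { carrier := {z : S | ∃ (b : R) (n : ℕ),
      z * algebraMap R S ((s0 : R) ^ n) = algebraMap R S b}
    mul_mem' := by
      rintro z1 z2 ⟨b1, n1, h1⟩ ⟨b2, n2, h2⟩
      exact ⟨b1 * b2, n1 + n2, by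
        rw [pow_add, map_mul, mul_mul_mul_comm, h1, h2, ← map_mul]⟩
    add_mem' := by
      rintro z1 z2 ⟨b1, n1, h1⟩ ⟨b2, n2, h2⟩
      refine ⟨b1 * (s0 : R) ^ n2 + b2 * (s0 : R) ^ n1, n1 + n2, ?_⟩
      have key : (z1 + z2) * algebraMap R S ((s0 : R) ^ (n1 + n2)) =
          (z1 * algebraMap R S ((s0 : R) ^ n1)) * algebraMap R S ((s0 : R) ^ n2) +
          (z2 * algebraMap R S ((s0 : R) ^ n2)) * algebraMap R S ((s0 : R) ^ n1) := by
        rw [pow_add, map_mul]; ring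
      rw [key, h1, h2, ← map_mul, ← map_mul, ← map_add]
    algebraMap_mem' := fun r => ⟨r, 0, by simp⟩ }
  have hTA : (T : Set S) ⊆ A := by
    intro x hx
    refine ⟨num x * ∏ y ∈ T.erase x, (den y : R), 1, ?_⟩
    have hprod : (s0 : R) = (den x : R) * ∏ y ∈ T.erase x, (den y : R) := by
      rw [hs0]
      push_cast
      rw [← Finset.mul_prod_erase _ _ hx]
    have hx2 : x * algebraMap R S ((den x : R)) = algebraMap R S (num x) := by
      have := IsLocalization.mk'_spec S (num x) (den x)
      rwa [hden x] at this
    rw [pow_one, hprod, map_mul, ← mul_assoc, hx2, ← map_mul]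
  have hA : ∀ z : S, z ∈ A := by
    intro z
    have : Algebra.adjoin R (T : Set S) ≤ A := Algebra.adjoin_le hTA
    exact this (hT ▸ Algebra.mem_top)
  refine ⟨(s0 : R), s0.2, fun t ht => ?_⟩
  obtain ⟨b, n, hb⟩ := hA (IsLocalization.mk' S 1 ⟨t, ht⟩)
  refine ⟨b, n, hinj ?_⟩
  have := congrArg (· * algebraMap R S t) hb
  rw [mul_comm _ (algebraMap R S ((s0 : R) ^ n)), mul_assoc] at this
  calc algebraMap R S (b * t) = algebraMap R S b * algebraMap R S t := by rw [map_mul]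
    _ = algebraMap R S ((s0 : R) ^ n) *
        (IsLocalization.mk' S 1 (⟨t, ht⟩ : m.primeCompl) * algebraMap R S t) := this.symm
    _ = algebraMap R S ((s0 : R) ^ n) := by
        rw [show algebraMap R S t = algebraMap R S ((⟨t, ht⟩ : m.primeCompl) : R) from rfl,
          IsLocalization.mk'_spec, map_one, mul_one]

/-- If for every maximal ideal `m` of `R` the canonical localization map
`R → R_m` is injective and of finite type, then `R` has only finitely many
maximal ideals. -/
theorem maximals_finite_of_localization_injective_finiteType {R : Type*} [CommRing R]
    (h : ∀ (m : Ideal R) (hm : m.IsMaximal),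
      haveI := hm.isPrime
      Function.Injective (algebraMap R (Localization.AtPrime m)) ∧
      (algebraMap R (Localization.AtPrime m)).FiniteType) :
    {I : Ideal R | I.IsMaximal}.Finite := by
  classical
  have key : ∀ m : {I : Ideal R // I.IsMaximal}, ∃ s : R, s ∉ m.1 ∧
      ∀ m' : Ideal R, m'.IsMaximal → m' ≠ m.1 → s ∈ m' := by
    rintro ⟨m, hm⟩
    haveI := hm.isPrime
    obtain ⟨hinj, hft⟩ := h m hm
    have heq : (algebraMap R (Localization.AtPrime m)).toAlgebra =
        (inferInstance : Algebra R (Localization.AtPrime m)) :=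
      Algebra.algebra_ext _ _ fun r => rfl
    have hft' : Algebra.FiniteType R (Localization.AtPrime m) := by
      rw [RingHom.FiniteType] at hft
      rwa [heq] at hft
    obtain ⟨s, hs, hdiv⟩ := exists_good_elt m hinj hft'
    refine ⟨s, hs, fun m' hm' hne => ?_⟩
    obtain ⟨t, htm', htm⟩ : ∃ t, t ∈ m' ∧ t ∉ m := by
      by_contra hc
      push_neg at hc
      exact hne (hm'.eq_of_le hm.ne_top hc)
    obtain ⟨b, n, hbt⟩ := hdiv t htm
    have hpow : s ^ n ∈ m' := hbt ▸ Ideal.mul_mem_left _ b htm'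
    exact hm'.isPrime.mem_of_pow_mem n hpow
  choose s hs1 hs2 using key
  have hspan : Ideal.span (Set.range s) = ⊤ := by
    by_contra hne
    obtain ⟨M, hM, hle⟩ := Ideal.exists_le_maximal _ hne
    exact hs1 ⟨M, hM⟩ (hle (Ideal.subset_span ⟨⟨M, hM⟩, rfl⟩))
  have h1 : (1 : R) ∈ Ideal.span (Set.range s) := hspan ▸ Submodule.mem_top
  obtain ⟨T, hTsub, hT1⟩ := Submodule.mem_span_finite_of_mem_span h1
  choose idx hidx using fun (x : R) (hx : x ∈ (T : Set R)) => hTsub hx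
  apply Set.Finite.subset (Set.finite_range fun x : (T : Set R) => (idx x.1 x.2).1)
  intro m hm
  by_contra hme
  have hne : ∀ x : (T : Set R), m ≠ (idx x.1 x.2).1 := by
    intro x he
    exact hme ⟨x, he.symm⟩
  have hTm : (T : Set R) ⊆ ↑m := by
    intro x hx
    have := hs2 (idx x hx) m hm (hne ⟨x, hx⟩)
    rwa [hidx x hx] at this
  have hle : Ideal.span (T : Set R) ≤ m := Ideal.span_le.mpr hTm
  exact hm.ne_top ((Ideal.eq_top_iff_one m).mpr (hle hT1))
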